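/- A commutative ring R is von Neumann regular if and only if R is weak von Neumann regular and for every nonunit element a of R there exists an idempotent e ≠ 1 of R such that a ∈ Re. -/

import Mathlib

/-- A commutative ring is weak von Neumann regular (WVNR) if for every pair of
finitely generated ideals `I ⊆ J ⊊ R`, if `J` is generated by an idempotent,
then so is `I`. -/
def IsWVNR (R : Type _) [CommRing R] : Prop :=
  ∀ I J : Ideal R, I.FG → J.FG → I ≤ J → J ≠ ⊤ →
    (∃ e : R, IsIdempotentElem e ∧ J = Ideal.span {e}) →
    ∃ f : R, IsIdempotentElem f ∧ I = Ideal.span {f}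

/-- von Neumann regular: every `x` satisfies `x = x² y` for some `y`. -/
def IsVNRegular (R : Type _) [CommRing R] : Prop :=
  ∀ x : R, ∃ y : R, x = x ^ 2 * y

lemma span_sup_idem {R : Type _} [CommRing R] {e f : R}
    (he : IsIdempotentElem e) (hf : IsIdempotentElem f) :
    IsIdempotentElem (e + f - e * f) ∧
      Ideal.span {e} ⊔ Ideal.span {f} = Ideal.span ({e + f - e * f} : Set R) := by
  have he' : e * e = e := he
  have hf' : f * f = f := hf
  constructor
  · show _ * _ = _
    linear_combination ((1 - f)^2) * he' + (1 - e) * hf'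
  · apply le_antisymm
    · apply sup_le <;> rw [Ideal.span_singleton_le_span_singleton]
      · exact ⟨e, by linear_combination (f - 1) * he'⟩
      · exact ⟨f, by linear_combination (e - 1) * hf'⟩
    · rw [Ideal.span_singleton_le_iff_mem]
      have h1 : e ∈ Ideal.span ({e} : Set R) ⊔ Ideal.span {f} :=
        Ideal.mem_sup_left (Ideal.mem_span_singleton_self e)
      have h2 : f ∈ Ideal.span ({e} : Set R) ⊔ Ideal.span {f} :=
        Ideal.mem_sup_right (Ideal.mem_span_singleton_self f)
      have := Ideal.sub_mem _ (Ideal.add_mem _ h1 h2) (Ideal.mul_mem_left _ e h2)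
      exact this

lemma vnr_span_idem {R : Type _} [CommRing R] (h : IsVNRegular R) (I : Ideal R) (hI : I.FG) :
    ∃ e : R, IsIdempotentElem e ∧ I = Ideal.span {e} := by
  refine Submodule.fg_induction (motive := fun I _ => ∃ e : R, IsIdempotentElem e ∧ I = Ideal.span {e}) ?_ ?_ I hI
  · intro x
    show ∃ e : R, IsIdempotentElem e ∧ Ideal.span {x} = Ideal.span {e}
    obtain ⟨y, hy⟩ := h x
    refine ⟨x * y, ?_, ?_⟩
    · have : x * y * (x * y) = (x ^ 2 * y) * y := by ring
      unfold IsIdempotentElem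
      rw [this, ← hy]
    · apply le_antisymm <;> rw [Ideal.span_singleton_le_span_singleton]
      · exact ⟨x, by rw [show x * y * x = x ^ 2 * y by ring, ← hy]⟩
      · exact ⟨y, rfl⟩
  · rintro I J _ _ ⟨e, he, rfl⟩ ⟨f, hf, rfl⟩
    obtain ⟨h1, h2⟩ := span_sup_idem he hf
    exact ⟨_, h1, h2⟩

theorem stmt_4 (R : Type _) [CommRing R] [Nontrivial R] :
    IsVNRegular R ↔ IsWVNR R ∧ ∀ a : R, ¬ IsUnit a →
      ∃ e : R, IsIdempotentElem e ∧ e ≠ 1 ∧ a ∈ Ideal.span ({e} : Set R) := by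
  constructor
  · intro h
    constructor
    · intro I J hIfg _ _ _ _
      exact vnr_span_idem h I hIfg
    · intro a ha
      obtain ⟨y, hy⟩ := h a
      refine ⟨a * y, ?_, ?_, ?_⟩
      · unfold IsIdempotentElem
        rw [show a * y * (a * y) = a ^ 2 * y * y by ring, ← hy]
      · intro h1
        exact ha (IsUnit.of_mul_eq_one y h1)
      · rw [Ideal.mem_span_singleton]
        exact ⟨a, by rw [show a * y * a = a ^ 2 * y by ring, ← hy]⟩
  · rintro ⟨hw, hid⟩ x
    by_cases hx : IsUnit x
    · obtain ⟨u, rfl⟩ := hx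
      exact ⟨↑u⁻¹, by rw [sq]; simp [mul_assoc]⟩
    · obtain ⟨e, he, he1, hxe⟩ := hid x hx
      have hJtop : Ideal.span ({e} : Set R) ≠ ⊤ := by
        intro htop
        have : IsUnit e := by
          rwa [Ideal.span_singleton_eq_top] at htop
        exact he1 (this.mul_left_cancel (by rw [mul_one]; exact he))
      obtain ⟨f, hf, hspan⟩ := hw (Ideal.span {x}) (Ideal.span {e})
        ⟨{x}, by simp⟩ ⟨{e}, by simp⟩
        ((Ideal.span_singleton_le_iff_mem _).mpr hxe) hJtop ⟨e, he, rfl⟩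
      have hxf : x ∈ Ideal.span ({f} : Set R) := by
        rw [← hspan]; exact Ideal.mem_span_singleton_self x
      have hfx : f ∈ Ideal.span ({x} : Set R) := by
        rw [hspan]; exact Ideal.mem_span_singleton_self f
      rw [Ideal.mem_span_singleton] at hxf hfx
      obtain ⟨c, hc⟩ := hxf
      obtain ⟨d, hd⟩ := hfx
      refine ⟨d, ?_⟩
      have hf' : f * f = f := hf
      have h1 : x * f = x := by
        rw [hc]; linear_combination c * hf'
      calc x = x * f := h1.symm
        _ = x * (x * d) := by rw [← hd]
        _ = x ^ 2 * d := by ring
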